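/- Let t > 0 and let β > Ψ(t). Then there exists a sequence γ : ℕ → ℂ such that the Hankel matrix {γ_{j+k}}_{j,k≥0} belongs to the injective tensor product ℓ¹⊗̌ℓ¹ but ∑_{k≥0} |γ_k|^t (1+k)^β = ∞. -/

import Mathlib

open Filter Finset

/-- The Hankel matrix `{γ_{j+k}}` belongs to the injective tensor product `ℓ¹ ⊗̌ ℓ¹`:
the partial bilinear sums against sequences in the unit ball of `ℓ^∞` are uniformly bounded. -/
def HankelInInj (γ : ℕ → ℂ) : Prop :=
  ∃ C : ℝ, ∀ (N : ℕ) (x y : ℕ → ℂ), (∀ j, ‖x j‖ ≤ 1) → (∀ k, ‖y k‖ ≤ 1) →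
    ‖∑ j ∈ Finset.range (N + 1), ∑ k ∈ Finset.range (N + 1), γ (j + k) * x j * y k‖ ≤ C

/-- The function `Ψ` of Pełczyński–Sukochev: `Ψ(t) = (3/2)t - 1` for `t ≤ 2`, `Ψ(t) = t` for `t > 2`. -/
noncomputable def Psi (t : ℝ) : ℝ := if t ≤ 2 then 3 / 2 * t - 1 else t

namespace PSaux

noncomputable def om (L : ℕ) : ℂ := Complex.exp (2 * Real.pi * Complex.I / L)

lemma abs_om (L : ℕ) : ‖om L‖ = 1 := by
  have h : (2 * Real.pi * Complex.I / L) = ((2 * Real.pi / L : ℝ) : ℂ) * Complex.I := by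
    push_cast; ring
  rw [om, h, Complex.norm_exp_ofReal_mul_I]

lemma conj_eq_inv {z : ℂ} (hz : ‖z‖ = 1) : (starRingEnd ℂ) z = z⁻¹ := by
  have h1 : z * (starRingEnd ℂ) z = 1 := by
    rw [Complex.mul_conj, ← Complex.sq_norm, hz]; norm_num
  exact eq_inv_of_mul_eq_one_right h1

lemma abs_om_pow (L k : ℕ) : ‖om L ^ k‖ = 1 := by
  rw [norm_pow, abs_om, one_pow]

lemma om_pow_ne (L k : ℕ) : om L ^ k ≠ 0 := by
  intro h
  have := abs_om_pow L k
  rw [h] at this; simp at this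

lemma orth {L : ℕ} (hL : L ≠ 0) {s n : ℕ} (hs : s < L) (hn : n < L) :
    ∑ l ∈ range L, om L ^ (l * s) * (starRingEnd ℂ) (om L ^ (l * n))
      = if s = n then (L : ℂ) else 0 := by
  have hprim : IsPrimitiveRoot (om L) L := Complex.isPrimitiveRoot_exp L hL
  have hterm : ∀ l, om L ^ (l * s) * (starRingEnd ℂ) (om L ^ (l * n))
      = (om L ^ s * (om L ^ n)⁻¹) ^ l := by
    intro l
    rw [conj_eq_inv (abs_om_pow L _), mul_pow, inv_pow, ← pow_mul, ← pow_mul,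
      mul_comm s l, mul_comm n l]
  rw [Finset.sum_congr rfl fun l _ => hterm l]
  by_cases h : s = n
  · subst h
    rw [mul_inv_cancel₀ (om_pow_ne L s)]
    simp
  · have hζ1 : om L ^ s * (om L ^ n)⁻¹ ≠ 1 := by
      intro hz
      rw [mul_inv_eq_one₀ (om_pow_ne L n)] at hz
      exact h (hprim.pow_inj hs hn hz)
    have hζL : (om L ^ s * (om L ^ n)⁻¹) ^ L = 1 := by
      rw [mul_pow, inv_pow, ← pow_mul, ← pow_mul, mul_comm s L, mul_comm n L,
        pow_mul, pow_mul, hprim.pow_eq_one, one_pow, one_pow, inv_one, mul_one]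
    rw [geom_sum_eq hζ1, hζL]
    simp [h]

lemma parseval_complex {L : ℕ} (hL : L ≠ 0) (u : ℕ → ℂ) {K : ℕ} (hK : K ≤ L) :
    ∑ l ∈ range L, ((∑ j ∈ range K, u j * (starRingEnd ℂ) (om L ^ (l * j))) *
        (starRingEnd ℂ) (∑ j ∈ range K, u j * (starRingEnd ℂ) (om L ^ (l * j))))
      = (L : ℂ) * ∑ j ∈ range K, u j * (starRingEnd ℂ) (u j) := by
  have expand : ∀ l, ((∑ j ∈ range K, u j * (starRingEnd ℂ) (om L ^ (l * j))) *
        (starRingEnd ℂ) (∑ j ∈ range K, u j * (starRingEnd ℂ) (om L ^ (l * j))))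
      = ∑ p ∈ range K, ∑ j ∈ range K,
          u p * (starRingEnd ℂ) (u j) * (om L ^ (l * j) * (starRingEnd ℂ) (om L ^ (l * p)))
      := by
    intro l
    rw [map_sum, Finset.sum_mul_sum]
    refine Finset.sum_congr rfl fun p _ => Finset.sum_congr rfl fun j _ => ?_
    rw [map_mul, Complex.conj_conj]
    ring
  rw [Finset.sum_congr rfl fun l _ => expand l]
  rw [Finset.sum_comm]
  have swap : ∀ p ∈ range K, (∑ l ∈ range L, ∑ j ∈ range K,
      u p * (starRingEnd ℂ) (u j) * (om L ^ (l * j) * (starRingEnd ℂ) (om L ^ (l * p))))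
      = (L:ℂ) * (u p * (starRingEnd ℂ) (u p)) := by
    intro p hp
    rw [Finset.sum_comm]
    have h1 : ∀ j ∈ range K, (∑ l ∈ range L,
        u p * (starRingEnd ℂ) (u j) * (om L ^ (l * j) * (starRingEnd ℂ) (om L ^ (l * p))))
        = if j = p then u p * (starRingEnd ℂ) (u j) * (L:ℂ) else 0 := by
      intro j hj
      rw [← Finset.mul_sum, orth hL (lt_of_lt_of_le (mem_range.mp hj) hK)
        (lt_of_lt_of_le (mem_range.mp hp) hK)]
      split <;> simp
    rw [Finset.sum_congr rfl h1, Finset.sum_ite_eq' (range K) p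
      (fun j => u p * (starRingEnd ℂ) (u j) * (L:ℂ))]
    simp only [hp, if_true]
    ring
  rw [Finset.sum_congr rfl swap, ← Finset.mul_sum]

lemma parseval {L : ℕ} (hL : L ≠ 0) (u : ℕ → ℂ) {K : ℕ} (hK : K ≤ L) :
    ∑ l ∈ range L, ‖∑ j ∈ range K, u j * (starRingEnd ℂ) (om L ^ (l * j))‖ ^ 2
      = L * ∑ j ∈ range K, ‖u j‖ ^ 2 := by
  have := parseval_complex hL u hK
  have cast1 : ∀ z : ℂ, z * (starRingEnd ℂ) z = ((‖z‖ ^ 2 : ℝ) : ℂ) := by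
    intro z
    rw [Complex.mul_conj]
    norm_cast
    rw [← Complex.sq_norm]
  rw [Finset.sum_congr rfl (fun l _ => cast1 _),
    Finset.sum_congr rfl (fun (j : ℕ) _ => cast1 (u j))] at this
  have : ((∑ l ∈ range L, ‖∑ j ∈ range K, u j * (starRingEnd ℂ) (om L ^ (l * j))‖ ^ 2 : ℝ) : ℂ)
      = (((L : ℝ) * ∑ j ∈ range K, ‖u j‖ ^ 2 : ℝ) : ℂ) := by
    push_cast
    push_cast at this
    exact this
  exact_mod_cast this


lemma cs_sqrt {n : ℕ} (f g : ℕ → ℝ) (hf : ∀ i, 0 ≤ f i) (hg : ∀ i, 0 ≤ g i) :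
    ∑ i ∈ range n, f i * g i ≤
      Real.sqrt (∑ i ∈ range n, f i ^ 2) * Real.sqrt (∑ i ∈ range n, g i ^ 2) := by
  rw [← Real.sqrt_mul (Finset.sum_nonneg fun i _ => sq_nonneg (f i))]
  rw [show ∑ i ∈ range n, f i * g i
      = Real.sqrt ((∑ i ∈ range n, f i * g i) ^ 2) from
    (Real.sqrt_sq (Finset.sum_nonneg fun i _ => mul_nonneg (hf i) (hg i))).symm]
  exact Real.sqrt_le_sqrt (Finset.sum_mul_sq_le_sq_mul_sq _ _ _)

lemma fourier_bound {L : ℕ} (hL : L ≠ 0) (a u v : ℕ → ℂ) {K : ℕ} (hK2 : 2 * K ≤ L + 1)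
    (hKL : K ≤ L) {B : ℝ}
    (hB : ∀ z : ℂ, ‖z‖ = 1 → ‖∑ s ∈ range L, a s * z ^ s‖ ≤ B) :
    ‖∑ j ∈ range K, ∑ k ∈ range K, a (j + k) * u j * v k‖ ≤
      B * (Real.sqrt (∑ j ∈ range K, ‖u j‖ ^ 2) * Real.sqrt (∑ k ∈ range K, ‖v k‖ ^ 2)) := by
  have hB0 : 0 ≤ B := le_trans (norm_nonneg _) (hB 1 (by simp))
  rcases Nat.eq_zero_or_pos K with hK0 | hK0
  · subst hK0; simp
  -- inversion
  have inv : ∀ n, n < L → (L : ℂ) * a n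
      = ∑ l ∈ range L, (∑ s ∈ range L, a s * om L ^ (l * s)) * (starRingEnd ℂ) (om L ^ (l * n)) := by
    intro n hn
    have h0 : ∀ l ∈ range L, (∑ s ∈ range L, a s * om L ^ (l * s)) * (starRingEnd ℂ) (om L ^ (l * n))
        = ∑ s ∈ range L, a s * (om L ^ (l * s) * (starRingEnd ℂ) (om L ^ (l * n))) := by
      intro l _
      rw [Finset.sum_mul]
      exact Finset.sum_congr rfl fun s _ => by ring
    rw [Finset.sum_congr rfl h0, Finset.sum_comm]
    have h2 : ∀ s ∈ range L, (∑ l ∈ range L, a s * (om L ^ (l * s) * (starRingEnd ℂ) (om L ^ (l * n))))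
        = if s = n then a s * L else 0 := by
      intro s hs
      rw [← Finset.mul_sum, orth hL (mem_range.mp hs) hn]
      split <;> simp
    rw [Finset.sum_congr rfl h2, Finset.sum_ite_eq' (range L) n (fun s => a s * (L:ℂ))]
    simp only [mem_range.mpr hn, if_true]
    ring
  set F : ℕ → ℂ := fun l => ∑ s ∈ range L, a s * om L ^ (l * s) with hF
  set U : ℕ → ℂ := fun l => ∑ j ∈ range K, u j * (starRingEnd ℂ) (om L ^ (l * j)) with hU
  set V : ℕ → ℂ := fun l => ∑ k ∈ range K, v k * (starRingEnd ℂ) (om L ^ (l * k)) with hV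
  have key : ∑ l ∈ range L, F l * U l * V l
      = (L : ℂ) * ∑ j ∈ range K, ∑ k ∈ range K, a (j + k) * u j * v k := by
    have e1 : ∀ l ∈ range L, F l * U l * V l = ∑ j ∈ range K, ∑ k ∈ range K,
        (F l * ((starRingEnd ℂ) (om L ^ (l * j)) * u j) * ((starRingEnd ℂ) (om L ^ (l * k)) * v k)) := by
      intro l _
      rw [hU, hV]
      simp only [mul_assoc]
      rw [Finset.sum_mul_sum, Finset.mul_sum]
      refine Finset.sum_congr rfl fun j _ => ?_
      rw [Finset.mul_sum]
      exact Finset.sum_congr rfl fun k _ => by ring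
    rw [Finset.sum_congr rfl e1, Finset.sum_comm, Finset.mul_sum]
    refine Finset.sum_congr rfl fun j hj => ?_
    rw [Finset.sum_comm, Finset.mul_sum]
    refine Finset.sum_congr rfl fun k hk => ?_
    have hjk : j + k < L := by
      have h1 := mem_range.mp hj; have h2 := mem_range.mp hk; omega
    have hsplit : ∀ l, (starRingEnd ℂ) (om L ^ (l * (j + k)))
        = (starRingEnd ℂ) (om L ^ (l * j)) * (starRingEnd ℂ) (om L ^ (l * k)) := by
      intro l
      rw [← map_mul, ← pow_add, Nat.mul_add]
    calc ∑ l ∈ range L, F l * ((starRingEnd ℂ) (om L ^ (l * j)) * u j) *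
            ((starRingEnd ℂ) (om L ^ (l * k)) * v k)
        = (∑ l ∈ range L, F l * (starRingEnd ℂ) (om L ^ (l * (j + k)))) * u j * v k := by
          rw [Finset.sum_mul, Finset.sum_mul]
          refine Finset.sum_congr rfl fun l _ => ?_
          rw [hsplit l]; ring
      _ = ((L:ℂ) * a (j + k)) * u j * v k := by rw [← inv _ hjk]
      _ = (L:ℂ) * (a (j + k) * u j * v k) := by ring
  -- norm estimates
  have hFle : ∀ l, ‖F l‖ ≤ B := by
    intro l
    have : F l = ∑ s ∈ range L, a s * (om L ^ l) ^ s := by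
      rw [hF]
      exact Finset.sum_congr rfl fun s _ => by rw [← pow_mul]
    rw [this]
    exact hB _ (abs_om_pow L l)
  have step1 : (L : ℝ) * ‖∑ j ∈ range K, ∑ k ∈ range K, a (j + k) * u j * v k‖
      ≤ B * ∑ l ∈ range L, ‖U l‖ * ‖V l‖ := by
    have : (L : ℝ) * ‖∑ j ∈ range K, ∑ k ∈ range K, a (j + k) * u j * v k‖
        = ‖∑ l ∈ range L, F l * U l * V l‖ := by
      rw [key, norm_mul]
      simp
    rw [this, Finset.mul_sum]
    refine le_trans (norm_sum_le _ _) (Finset.sum_le_sum fun l _ => ?_)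
    rw [norm_mul, norm_mul]
    have h2 : ‖F l‖ * ‖U l‖ * ‖V l‖ ≤ B * (‖U l‖ * ‖V l‖) := by
      rw [mul_assoc]
      exact mul_le_mul_of_nonneg_right (hFle l)
        (mul_nonneg (norm_nonneg _) (norm_nonneg _))
    exact h2
  have step2 : ∑ l ∈ range L, ‖U l‖ * ‖V l‖
      ≤ (L : ℝ) * (Real.sqrt (∑ j ∈ range K, ‖u j‖ ^ 2) * Real.sqrt (∑ k ∈ range K, ‖v k‖ ^ 2)) := by
    have cs := cs_sqrt (n := L) (fun l => ‖U l‖) (fun l => ‖V l‖)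
      (fun l => norm_nonneg _) (fun l => norm_nonneg _)
    rw [parseval hL u hKL, parseval hL v hKL] at cs
    calc ∑ l ∈ range L, ‖U l‖ * ‖V l‖
        ≤ Real.sqrt ((L:ℝ) * ∑ j ∈ range K, ‖u j‖ ^ 2) *
            Real.sqrt ((L:ℝ) * ∑ k ∈ range K, ‖v k‖ ^ 2) := cs
      _ = (L : ℝ) * (Real.sqrt (∑ j ∈ range K, ‖u j‖ ^ 2) * Real.sqrt (∑ k ∈ range K, ‖v k‖ ^ 2)) := by
          rw [Real.sqrt_mul (Nat.cast_nonneg L), Real.sqrt_mul (Nat.cast_nonneg L)]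
          have h := Real.mul_self_sqrt (Nat.cast_nonneg L : (0:ℝ) ≤ (L:ℝ))
          linear_combination (Real.sqrt (∑ j ∈ range K, ‖u j‖ ^ 2) *
            Real.sqrt (∑ k ∈ range K, ‖v k‖ ^ 2)) * h
  have hLpos : (0:ℝ) < (L:ℝ) := by exact_mod_cast Nat.pos_of_ne_zero hL
  have final : (L : ℝ) * ‖∑ j ∈ range K, ∑ k ∈ range K, a (j + k) * u j * v k‖
      ≤ (L : ℝ) * (B * (Real.sqrt (∑ j ∈ range K, ‖u j‖ ^ 2) *
          Real.sqrt (∑ k ∈ range K, ‖v k‖ ^ 2))) := by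
    refine step1.trans ?_
    calc B * ∑ l ∈ range L, ‖U l‖ * ‖V l‖
        ≤ B * ((L:ℝ) * (Real.sqrt (∑ j ∈ range K, ‖u j‖ ^ 2) *
            Real.sqrt (∑ k ∈ range K, ‖v k‖ ^ 2))) :=
          mul_le_mul_of_nonneg_left step2 hB0
      _ = (L : ℝ) * (B * (Real.sqrt (∑ j ∈ range K, ‖u j‖ ^ 2) *
            Real.sqrt (∑ k ∈ range K, ‖v k‖ ^ 2))) := by ring
  exact le_of_mul_le_mul_left final hLpos

noncomputable def rs : ℕ → (ℕ → ℂ) × (ℕ → ℂ)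
  | 0 => (fun _ => 1, fun _ => 1)
  | (m+1) => (fun n => if n < 2^m then (rs m).1 n else (rs m).2 (n - 2^m),
              fun n => if n < 2^m then (rs m).1 n else -((rs m).2 (n - 2^m)))

lemma rs_norm (m : ℕ) : ∀ n, ‖(rs m).1 n‖ = 1 ∧ ‖(rs m).2 n‖ = 1 := by
  induction m with
  | zero => intro n; simp [rs]
  | succ m ih =>
    intro n
    simp only [rs]
    by_cases h : n < 2^m
    · simp [h, ih n]
    · simp [h, ih (n - 2^m)]

lemma rs_eval (m : ℕ) (z : ℂ) (hz : ‖z‖ = 1) :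
    ‖∑ n ∈ range (2^m), (rs m).1 n * z ^ n‖ ^ 2
      + ‖∑ n ∈ range (2^m), (rs m).2 n * z ^ n‖ ^ 2 = 2 ^ (m + 1) := by
  induction m with
  | zero => simp [rs]; norm_num
  | succ m ih =>
    have hsplit : (2:ℕ) ^ (m+1) = 2^m + 2^m := by rw [pow_succ]; ring
    have habs : ‖z ^ 2 ^ m‖ = 1 := by rw [norm_pow, hz, one_pow]
    have hzn : ‖z ^ 2 ^ m‖ = 1 := habs
    set A := ∑ n ∈ range (2^m), (rs m).1 n * z ^ n with hA
    set Q := ∑ n ∈ range (2^m), (rs m).2 n * z ^ n with hQ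
    have e1 : ∑ n ∈ range (2^(m+1)), (rs (m+1)).1 n * z ^ n = A + z ^ 2^m * Q := by
      rw [hsplit, Finset.sum_range_add]
      congr 1
      · refine Finset.sum_congr rfl fun n hn => ?_
        have := mem_range.mp hn
        simp [rs, this]
      · rw [Finset.mul_sum]
        refine Finset.sum_congr rfl fun n hn => ?_
        have h1 : ¬ (2^m + n < 2^m) := by omega
        simp only [rs, h1, if_false, Nat.add_sub_cancel_left, pow_add]
        ring
    have e2 : ∑ n ∈ range (2^(m+1)), (rs (m+1)).2 n * z ^ n = A - z ^ 2^m * Q := by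
      rw [hsplit, Finset.sum_range_add]
      rw [sub_eq_add_neg]
      congr 1
      · refine Finset.sum_congr rfl fun n hn => ?_
        have := mem_range.mp hn
        simp [rs, this]
      · rw [hQ, Finset.mul_sum, ← Finset.sum_neg_distrib]
        refine Finset.sum_congr rfl fun n hn => ?_
        have h1 : ¬ (2^m + n < 2^m) := by omega
        simp only [rs, h1, if_false, Nat.add_sub_cancel_left, pow_add]
        ring
    rw [e1, e2]
    have par := parallelogram_law_with_norm ℂ A (z ^ 2^m * Q)
    have hn2 : ‖z ^ 2^m * Q‖ = ‖Q‖ := by rw [norm_mul, hzn, one_mul]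
    calc ‖A + z ^ 2^m * Q‖ ^ 2 + ‖A - z ^ 2^m * Q‖ ^ 2
        = ‖A + z ^ 2^m * Q‖ * ‖A + z ^ 2^m * Q‖ + ‖A - z ^ 2^m * Q‖ * ‖A - z ^ 2^m * Q‖ := by
          ring
      _ = 2 * (‖A‖ * ‖A‖ + ‖z ^ 2^m * Q‖ * ‖z ^ 2^m * Q‖) := by
          linear_combination par
      _ = 2 * (‖A‖ ^ 2 + ‖Q‖ ^ 2) := by rw [hn2]; ring
      _ = 2 ^ (m + 2) := by rw [ih]; ring

noncomputable def gam (c : ℕ → ℝ) (w : ℕ → ℕ → ℂ) : ℕ → ℂ :=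
  fun n => if n = 0 then 0 else (c (Nat.log 2 n) : ℂ) * w (Nat.log 2 n) (n - 2 ^ Nat.log 2 n)

noncomputable def gb (c : ℕ → ℝ) (w : ℕ → ℕ → ℂ) (m n : ℕ) : ℂ :=
  if 2 ^ m ≤ n ∧ n < 2 ^ (m + 1) then (c m : ℂ) * w m (n - 2 ^ m) else 0

lemma gam_block {c w m n} (hm : 2 ^ m ≤ n) (hn : n < 2 ^ (m + 1)) :
    gam c w n = (c m : ℂ) * w m (n - 2 ^ m) := by
  have hn0 : n ≠ 0 := by have := Nat.one_le_two_pow (n := m); omega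
  have hlog : Nat.log 2 n = m := Nat.log_eq_of_pow_le_of_lt_pow hm hn
  simp [gam, hn0, hlog]

lemma gam_decomp {c w} (M n : ℕ) (hn : n < 2 ^ M) :
    gam c w n = ∑ m ∈ range M, gb c w m n := by
  rcases Nat.eq_zero_or_pos n with h0 | h0
  · subst h0
    have : ∀ m ∈ range M, gb c w m 0 = 0 := by
      intro m _
      have := Nat.one_le_two_pow (n := m)
      simp only [gb]
      rw [if_neg (by omega)]
    rw [Finset.sum_congr rfl this]
    simp [gam]
  · have hn0 : n ≠ 0 := h0.ne'
    set m₀ := Nat.log 2 n with hm₀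
    have h1 : 2 ^ m₀ ≤ n := Nat.pow_log_le_self 2 hn0
    have h2 : n < 2 ^ (m₀ + 1) := Nat.lt_pow_succ_log_self one_lt_two n
    have hm₀M : m₀ ∈ range M := by
      rw [mem_range]
      exact Nat.log_lt_of_lt_pow hn0 hn
    rw [Finset.sum_eq_single_of_mem m₀ hm₀M]
    · rw [gb, if_pos ⟨h1, h2⟩, gam_block h1 h2]
    · intro b _ hb
      rw [gb, if_neg]
      intro ⟨hb1, hb2⟩
      exact hb (Nat.log_eq_of_pow_le_of_lt_pow hb1 hb2).symm

lemma block_bound {c : ℕ → ℝ} {w : ℕ → ℕ → ℂ} (hc : ∀ m, 0 ≤ c m)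
    {D : ℕ → ℝ}
    (hD : ∀ m (z : ℂ), ‖z‖ = 1 → ‖∑ i ∈ range (2 ^ m), w m i * z ^ i‖ ≤ D m)
    (m N : ℕ) (x y : ℕ → ℂ) (hx : ∀ j, ‖x j‖ ≤ 1) (hy : ∀ k, ‖y k‖ ≤ 1) :
    ‖∑ j ∈ range (N + 1), ∑ k ∈ range (N + 1), gb c w m (j + k) * x j * y k‖
      ≤ c m * D m * 2 ^ (m + 1) := by
  have hD0 : 0 ≤ D m := le_trans (norm_nonneg _) (hD m 1 (by simp))
  set x' : ℕ → ℂ := fun j => if j < 2 ^ (m + 1) then x j else 0 with hx'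
  set y' : ℕ → ℂ := fun k => if k < 2 ^ (m + 1) then y k else 0 with hy'
  have heq : ∑ j ∈ range (N + 1), ∑ k ∈ range (N + 1), gb c w m (j + k) * x j * y k
      = ∑ j ∈ range (N + 1), ∑ k ∈ range (N + 1), gb c w m (j + k) * x' j * y' k := by
    refine Finset.sum_congr rfl fun j _ => Finset.sum_congr rfl fun k _ => ?_
    by_cases hj : j < 2 ^ (m + 1)
    · by_cases hk : k < 2 ^ (m + 1)
      · simp [hx', hy', hj, hk]
      · have : gb c w m (j + k) = 0 := by rw [gb, if_neg]; omega
        simp [this]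
    · have : gb c w m (j + k) = 0 := by rw [gb, if_neg]; omega
      simp [this]
  rw [heq]
  set L := 2 * N + 2 ^ (m + 2) with hLdef
  have hL : L ≠ 0 := by positivity
  have hpow : (2:ℕ) ^ (m + 1) ≤ L := by
    have : (2:ℕ) ^ (m + 1) ≤ 2 ^ (m + 2) := Nat.pow_le_pow_right (by norm_num) (by omega)
    omega
  have hB : ∀ z : ℂ, ‖z‖ = 1 →
      ‖∑ s ∈ range L, gb c w m s * z ^ s‖ ≤ c m * D m := by
    intro z hz
    have hsub : Finset.Ico (2 ^ m) (2 ^ (m + 1)) ⊆ range L := by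
      intro s hs
      rw [mem_range]; rw [Finset.mem_Ico] at hs
      omega
    have h1 : ∑ s ∈ range L, gb c w m s * z ^ s
        = ∑ s ∈ Finset.Ico (2 ^ m) (2 ^ (m + 1)), gb c w m s * z ^ s := by
      refine (Finset.sum_subset hsub ?_).symm
      intro s _ hs
      rw [Finset.mem_Ico] at hs
      rw [gb, if_neg (by omega), zero_mul]
    have h2 : ∑ s ∈ Finset.Ico (2 ^ m) (2 ^ (m + 1)), gb c w m s * z ^ s
        = (c m : ℂ) * z ^ 2 ^ m * ∑ i ∈ range (2 ^ m), w m i * z ^ i := by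
      rw [Finset.sum_Ico_eq_sum_range]
      have hlen : 2 ^ (m + 1) - 2 ^ m = 2 ^ m := by
        rw [pow_succ]; omega
      rw [hlen, Finset.mul_sum]
      refine Finset.sum_congr rfl fun i hi => ?_
      have hii : i < 2 ^ m := mem_range.mp hi
      rw [gb, if_pos (by constructor <;> omega), Nat.add_sub_cancel_left, pow_add]
      ring
    rw [h1, h2]
    rw [norm_mul, norm_mul]
    have : ‖(c m : ℂ)‖ = c m := by
      rw [Complex.norm_real, Real.norm_eq_abs, _root_.abs_of_nonneg (hc m)]
    rw [this, show ‖z ^ 2 ^ m‖ = 1 by rw [norm_pow, show ‖z‖ = ‖z‖ from rfl, hz, one_pow],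
      mul_one]
    exact mul_le_mul_of_nonneg_left (hD m z hz) (hc m)
  have hK2 : 2 * (N + 1) ≤ L + 1 := by
    have : 1 ≤ (2:ℕ) ^ (m + 2) := Nat.one_le_two_pow
    omega
  have hKL : N + 1 ≤ L := by
    have : 1 ≤ (2:ℕ) ^ (m + 2) := Nat.one_le_two_pow
    omega
  have hfb := fourier_bound hL (gb c w m) x' y' hK2 hKL hB
  refine hfb.trans ?_
  have hsum : ∀ (u : ℕ → ℂ), (∀ j, ‖u j‖ ≤ 1) →
      ∑ j ∈ range (N + 1), ‖(fun j => if j < 2 ^ (m + 1) then u j else 0) j‖ ^ 2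
        ≤ (2:ℝ) ^ (m + 1) := by
    intro u hu
    have step : ∑ j ∈ range (N + 1), ‖(fun j => if j < 2 ^ (m + 1) then u j else 0) j‖ ^ 2
        ≤ ∑ j ∈ range (N + 1), (if j < 2 ^ (m + 1) then (1:ℝ) else 0) := by
      refine Finset.sum_le_sum fun j _ => ?_
      by_cases hj : j < 2 ^ (m + 1)
      · simp only [hj, if_true]
        exact pow_le_one₀ (norm_nonneg _) (hu j)
      · simp [hj]
    refine step.trans ?_
    rw [Finset.sum_ite, Finset.sum_const_zero, add_zero, Finset.sum_const, nsmul_eq_mul, mul_one]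
    have hcard : (Finset.filter (fun j => j < 2 ^ (m + 1)) (range (N + 1))).card
        ≤ 2 ^ (m + 1) := by
      have hsub2 : Finset.filter (fun j => j < 2 ^ (m + 1)) (range (N + 1)) ⊆ range (2 ^ (m + 1)) := by
        intro j hj
        rw [Finset.mem_filter] at hj
        exact mem_range.mpr hj.2
      calc (Finset.filter (fun j => j < 2 ^ (m + 1)) (range (N + 1))).card
          ≤ (range (2 ^ (m + 1))).card := Finset.card_le_card hsub2
        _ = 2 ^ (m + 1) := Finset.card_range _
    calc ((Finset.filter (fun j => j < 2 ^ (m + 1)) (range (N + 1))).card : ℝ)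
        ≤ ((2 ^ (m + 1) : ℕ) : ℝ) := by exact_mod_cast hcard
      _ = (2:ℝ) ^ (m + 1) := by push_cast; ring
  calc c m * D m * (Real.sqrt (∑ j ∈ range (N + 1), ‖x' j‖ ^ 2) *
          Real.sqrt (∑ k ∈ range (N + 1), ‖y' k‖ ^ 2))
      ≤ c m * D m * (Real.sqrt ((2:ℝ) ^ (m + 1)) * Real.sqrt ((2:ℝ) ^ (m + 1))) := by
        refine mul_le_mul_of_nonneg_left ?_ (mul_nonneg (hc m) hD0)
        exact mul_le_mul (Real.sqrt_le_sqrt (hsum x hx)) (Real.sqrt_le_sqrt (hsum y hy))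
          (Real.sqrt_nonneg _) (Real.sqrt_nonneg _)
    _ = c m * D m * 2 ^ (m + 1) := by
        rw [Real.mul_self_sqrt (by positivity)]
lemma generic (t β : ℝ) (ht : 0 < t)
    (w : ℕ → ℕ → ℂ) (hw : ∀ m i, ‖w m i‖ ≤ 1)
    (c : ℕ → ℝ) (hc : ∀ m, 0 ≤ c m)
    (D : ℕ → ℝ)
    (hD : ∀ m (z : ℂ), ‖z‖ = 1 → ‖∑ i ∈ range (2 ^ m), w m i * z ^ i‖ ≤ D m)
    (C₀ : ℝ) (hC : ∀ M : ℕ, ∑ m ∈ range M, c m * D m * 2 ^ (m + 1) ≤ C₀)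
    (Kd : ℝ) (hKd : 0 < Kd)
    (hdiv : ∀ m : ℕ, Kd ≤ ∑ i ∈ range (2 ^ m),
        (c m * ‖w m i‖) ^ t * (1 + ((2 ^ m + i : ℕ) : ℝ)) ^ β) :
    ∃ γ : ℕ → ℂ, HankelInInj γ ∧ ¬ Summable fun k : ℕ => ‖γ k‖ ^ t * (1 + (k : ℝ)) ^ β := by
  refine ⟨gam c w, ⟨C₀, ?_⟩, ?_⟩
  · intro N x y hx hy
    set M := N + 1 with hM
    have hdecomp : ∀ j ∈ range (N + 1), ∀ k ∈ range (N + 1),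
        gam c w (j + k) = ∑ m ∈ range M, gb c w m (j + k) := by
      intro j hj k hk
      refine gam_decomp M (j + k) ?_
      have h1 := mem_range.mp hj
      have h2 := mem_range.mp hk
      have h3 : N < 2 ^ N := Nat.lt_two_pow_self
      have h4 : (2:ℕ) ^ N ≥ 1 := Nat.one_le_two_pow
      calc j + k ≤ 2 * N := by omega
        _ < 2 ^ (N + 1) := by rw [pow_succ]; omega
    have hswap : ∑ j ∈ range (N + 1), ∑ k ∈ range (N + 1), gam c w (j + k) * x j * y k
        = ∑ m ∈ range M, ∑ j ∈ range (N + 1), ∑ k ∈ range (N + 1),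
            gb c w m (j + k) * x j * y k := by
      have e1 : ∀ j ∈ range (N + 1), ∑ k ∈ range (N + 1), gam c w (j + k) * x j * y k
          = ∑ m ∈ range M, ∑ k ∈ range (N + 1), gb c w m (j + k) * x j * y k := by
        intro j hj
        have e2 : ∀ k ∈ range (N + 1), gam c w (j + k) * x j * y k
            = ∑ m ∈ range M, gb c w m (j + k) * x j * y k := by
          intro k hk
          rw [hdecomp j hj k hk, Finset.sum_mul, Finset.sum_mul]
        rw [Finset.sum_congr rfl e2, Finset.sum_comm]
      rw [Finset.sum_congr rfl e1, Finset.sum_comm]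
    rw [hswap]
    refine le_trans (norm_sum_le _ _) ?_
    exact le_trans (Finset.sum_le_sum fun m _ => block_bound hc hD m N x y hx hy) (hC M)
  · intro hS
    set f : ℕ → ℝ := fun k => ‖gam c w k‖ ^ t * (1 + (k : ℝ)) ^ β with hf
    have hf0 : ∀ k, 0 ≤ f k := by
      intro k
      exact mul_nonneg (Real.rpow_nonneg (norm_nonneg _) t)
        (Real.rpow_nonneg (by positivity) β)
    have hblock : ∀ m : ℕ, Kd ≤ ∑ n ∈ Finset.Ico (2 ^ m) (2 ^ (m + 1)), f n := by
      intro m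
      rw [Finset.sum_Ico_eq_sum_range]
      have hlen : 2 ^ (m + 1) - 2 ^ m = 2 ^ m := by rw [pow_succ]; omega
      rw [hlen]
      refine le_trans (hdiv m) (le_of_eq (Finset.sum_congr rfl fun i hi => ?_))
      have hii : i < 2 ^ m := mem_range.mp hi
      have h1 : 2 ^ m ≤ 2 ^ m + i := Nat.le_add_right _ _
      have h2 : 2 ^ m + i < 2 ^ (m + 1) := by rw [pow_succ]; omega
      rw [hf]
      simp only
      rw [gam_block h1 h2, Nat.add_sub_cancel_left, norm_mul, Complex.norm_real,
        Real.norm_eq_abs, _root_.abs_of_nonneg (hc m)]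
    have hpart : ∀ M : ℕ, (M : ℝ) * Kd ≤ ∑ n ∈ Finset.Ico 1 (2 ^ M), f n := by
      intro M
      induction M with
      | zero => simp
      | succ M ih =>
        have hcons : ∑ n ∈ Finset.Ico 1 (2 ^ M), f n
            + ∑ n ∈ Finset.Ico (2 ^ M) (2 ^ (M + 1)), f n
            = ∑ n ∈ Finset.Ico 1 (2 ^ (M + 1)), f n :=
          Finset.sum_Ico_consecutive f Nat.one_le_two_pow
            (Nat.pow_le_pow_right (by norm_num) (by omega))
        rw [← hcons]
        push_cast
        have := hblock M
        nlinarith [ih, hblock M]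
    obtain ⟨M, hM⟩ := exists_nat_gt ((∑' k, f k) / Kd)
    have h1 : ∑ n ∈ Finset.Ico 1 (2 ^ M), f n ≤ ∑' k, f k :=
      Summable.sum_le_tsum _ (fun k _ => hf0 k) hS
    have h2 : (∑' k, f k) < (M : ℝ) * Kd := by
      rw [div_lt_iff₀ hKd] at hM
      exact hM
    linarith [hpart M]


lemma blockLower (β : ℝ) (m : ℕ) (r : ℝ) (h1 : (2:ℝ) ^ m ≤ r) (h2 : r ≤ (2:ℝ) ^ (m + 1)) :
    (2:ℝ) ^ ((m:ℝ) * β) * min 1 ((2:ℝ) ^ β) ≤ r ^ β := by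
  have h2m : (0:ℝ) < (2:ℝ) ^ m := by positivity
  have hrpos : 0 < r := lt_of_lt_of_le h2m h1
  have e1 : ((2:ℝ) ^ m : ℝ) ^ β = (2:ℝ) ^ ((m:ℝ) * β) := by
    rw [← Real.rpow_natCast 2 m, ← Real.rpow_mul (by norm_num)]
  rcases le_or_gt 0 β with hb | hb
  · have h3 : ((2:ℝ) ^ m) ^ β ≤ r ^ β := Real.rpow_le_rpow h2m.le h1 hb
    calc (2:ℝ) ^ ((m:ℝ) * β) * min 1 ((2:ℝ) ^ β) ≤ (2:ℝ) ^ ((m:ℝ) * β) * 1 :=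
          mul_le_mul_of_nonneg_left (min_le_left _ _) (Real.rpow_nonneg (by norm_num) _)
      _ = (2:ℝ) ^ ((m:ℝ) * β) := mul_one _
      _ ≤ r ^ β := by rw [← e1]; exact h3
  · have h3 : ((2:ℝ) ^ (m + 1)) ^ β ≤ r ^ β := Real.rpow_le_rpow_of_nonpos hrpos h2 hb.le
    have e2 : ((2:ℝ) ^ (m + 1) : ℝ) ^ β = (2:ℝ) ^ ((m:ℝ) * β) * (2:ℝ) ^ β := by
      rw [← Real.rpow_natCast 2 (m + 1), ← Real.rpow_mul (by norm_num),
        ← Real.rpow_add (by norm_num)]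
      congr 1
      push_cast
      ring
    calc (2:ℝ) ^ ((m:ℝ) * β) * min 1 ((2:ℝ) ^ β)
        ≤ (2:ℝ) ^ ((m:ℝ) * β) * (2:ℝ) ^ β :=
          mul_le_mul_of_nonneg_left (min_le_right _ _) (Real.rpow_nonneg (by norm_num) _)
      _ = ((2:ℝ) ^ (m + 1)) ^ β := e2.symm
      _ ≤ r ^ β := h3
  
lemma geomC {r : ℝ} (h0 : 0 ≤ r) (h1 : r < 1) (M : ℕ) :
    ∑ m ∈ range M, r ^ m ≤ (1 - r)⁻¹ := by
  calc ∑ m ∈ range M, r ^ m ≤ ∑' m : ℕ, r ^ m :=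
        Summable.sum_le_tsum _ (fun i _ => pow_nonneg h0 i) (summable_geometric_of_lt_one h0 h1)
    _ = (1 - r)⁻¹ := tsum_geometric_of_lt_one h0 h1

end PSaux

/-- Theorem 6.7 (ii) of [PS]: for `t > 0` and `β > Ψ(t)`, there is a Hankel matrix in
`ℓ¹ ⊗̌ ℓ¹` with `∑_k |γ_k|^t (1+k)^β = ∞`. -/
theorem exists_hankel_inj_weighted_not_summable_of_gt_Psi (t β : ℝ) (ht : 0 < t)
    (hβ : Psi t < β) :
    ∃ γ : ℕ → ℂ, HankelInInj γ ∧
      ¬ Summable fun k : ℕ => ‖γ k‖ ^ t * (1 + (k : ℝ)) ^ β := by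
  classical
  have h2 : (0:ℝ) < 2 := by norm_num
  have hKd : (0:ℝ) < min 1 ((2:ℝ) ^ β) := lt_min one_pos (Real.rpow_pos_of_pos h2 β)
  by_cases hcase : t ≤ 2
  · -- Rudin–Shapiro construction
    have hβ' : 3 / 2 * t - 1 < β := by rwa [Psi, if_pos hcase] at hβ
    set ε := 1 + β - 3 / 2 * t with hε
    have hεpos : 0 < ε := by rw [hε]; linarith
    set σ := min (ε / t) 1 with hσdef
    have hσpos : 0 < σ := lt_min (div_pos hεpos ht) one_pos
    have hσt : σ * t ≤ ε := by
      have h := min_le_left (ε / t) 1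
      calc σ * t ≤ (ε / t) * t := mul_le_mul_of_nonneg_right h ht.le
        _ = ε := by field_simp
    set r := (2:ℝ) ^ (-σ) with hr
    have hr0 : 0 ≤ r := Real.rpow_nonneg h2.le _
    have hr1 : r < 1 := Real.rpow_lt_one_of_one_lt_of_neg one_lt_two (by linarith)
    refine PSaux.generic t β ht (fun m i => (PSaux.rs m).1 i)
      (fun m i => le_of_eq ((PSaux.rs_norm m i).1))
      (fun m => (2:ℝ) ^ (-(3 / 2 + σ) * (m:ℝ))) (fun m => Real.rpow_nonneg h2.le _)
      (fun m => Real.sqrt ((2:ℝ) ^ (m + 1))) ?_ ((2:ℝ) ^ ((3:ℝ) / 2) * (1 - r)⁻¹) ?_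
      (min 1 ((2:ℝ) ^ β)) hKd ?_
    · -- hD
      intro m z hz
      have h := PSaux.rs_eval m z hz
      have hP : ‖∑ n ∈ range (2 ^ m), (PSaux.rs m).1 n * z ^ n‖ ^ 2 ≤ (2:ℝ) ^ (m + 1) := by
        nlinarith [sq_nonneg ‖∑ n ∈ range (2 ^ m), (PSaux.rs m).2 n * z ^ n‖]
      calc ‖∑ n ∈ range (2 ^ m), (PSaux.rs m).1 n * z ^ n‖
          = Real.sqrt (‖∑ n ∈ range (2 ^ m), (PSaux.rs m).1 n * z ^ n‖ ^ 2) :=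
            (Real.sqrt_sq (norm_nonneg _)).symm
        _ ≤ Real.sqrt ((2:ℝ) ^ (m + 1)) := Real.sqrt_le_sqrt hP
    · -- hC
      intro M
      have hterm : ∀ m : ℕ, (2:ℝ) ^ (-(3 / 2 + σ) * (m:ℝ)) * Real.sqrt ((2:ℝ) ^ (m + 1)) *
          2 ^ (m + 1) = (2:ℝ) ^ ((3:ℝ) / 2) * r ^ m := by
        intro m
        rw [Real.sqrt_eq_rpow, ← Real.rpow_natCast (2:ℝ) (m + 1), ← Real.rpow_mul h2.le,
          ← Real.rpow_add h2, ← Real.rpow_add h2, hr, ← Real.rpow_natCast ((2:ℝ) ^ (-σ)) m,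
          ← Real.rpow_mul h2.le, ← Real.rpow_add h2]
        congr 1
        push_cast
        ring
      rw [Finset.sum_congr rfl fun m _ => hterm m, ← Finset.mul_sum]
      exact mul_le_mul_of_nonneg_left (PSaux.geomC hr0 hr1 M) (Real.rpow_nonneg h2.le _)
    · -- hdiv
      intro m
      have hterm : ∀ i ∈ range (2 ^ m),
          (2:ℝ) ^ (-(3 / 2 + σ) * (m:ℝ) * t) * ((2:ℝ) ^ ((m:ℝ) * β) * min 1 ((2:ℝ) ^ β))
          ≤ ((2:ℝ) ^ (-(3 / 2 + σ) * (m:ℝ)) * ‖(PSaux.rs m).1 i‖) ^ t *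
            (1 + ((2 ^ m + i : ℕ) : ℝ)) ^ β := by
        intro i hi
        have hii : i < 2 ^ m := mem_range.mp hi
        rw [(PSaux.rs_norm m i).1, mul_one]
        have e3 : ((2:ℝ) ^ (-(3 / 2 + σ) * (m:ℝ))) ^ t = (2:ℝ) ^ (-(3 / 2 + σ) * (m:ℝ) * t) :=
          (Real.rpow_mul h2.le _ _).symm
        rw [e3]
        refine mul_le_mul_of_nonneg_left ?_ (Real.rpow_nonneg h2.le _)
        refine PSaux.blockLower β m _ ?_ ?_
        · have : ((2:ℕ) ^ m : ℝ) ≤ ((2 ^ m + i : ℕ) : ℝ) := by exact_mod_cast Nat.le_add_right _ _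
          push_cast at this ⊢
          linarith
        · have : ((2 ^ m + i : ℕ) : ℝ) + 1 ≤ ((2 ^ (m + 1) : ℕ) : ℝ) := by
            exact_mod_cast Nat.succ_le_of_lt (by rw [pow_succ]; omega)
          push_cast at this ⊢
          linarith
      refine le_trans ?_ (Finset.sum_le_sum hterm)
      rw [Finset.sum_const, Finset.card_range, nsmul_eq_mul]
      have e4 : ((2 ^ m : ℕ) : ℝ) * ((2:ℝ) ^ (-(3 / 2 + σ) * (m:ℝ) * t) *
          ((2:ℝ) ^ ((m:ℝ) * β) * min 1 ((2:ℝ) ^ β)))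
          = (2:ℝ) ^ ((m:ℝ) * (ε - σ * t)) * min 1 ((2:ℝ) ^ β) := by
        have c1 : ((2 ^ m : ℕ) : ℝ) = (2:ℝ) ^ ((m:ℕ) : ℝ) := by
          push_cast
          rw [Real.rpow_natCast]
        rw [c1, ← mul_assoc, ← Real.rpow_add h2, ← mul_assoc, ← Real.rpow_add h2]
        congr 1
        rw [hε]
        ring
      rw [e4]
      have h5 : (1:ℝ) ≤ (2:ℝ) ^ ((m:ℝ) * (ε - σ * t)) := by
        rw [show (1:ℝ) = (2:ℝ) ^ (0:ℝ) from (Real.rpow_zero 2).symm]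
        refine Real.rpow_le_rpow_of_exponent_le one_le_two ?_
        have : 0 ≤ ε - σ * t := by linarith
        positivity
      nlinarith [hKd]
  · -- lacunary construction
    have hβ' : t < β := by rwa [Psi, if_neg hcase] at hβ
    set ε := β - t with hε
    have hεpos : 0 < ε := by rw [hε]; linarith
    set σ := min (ε / t) 1 with hσdef
    have hσpos : 0 < σ := lt_min (div_pos hεpos ht) one_pos
    have hσt : σ * t ≤ ε := by
      have h := min_le_left (ε / t) 1
      calc σ * t ≤ (ε / t) * t := mul_le_mul_of_nonneg_right h ht.le
        _ = ε := by field_simp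
    set r := (2:ℝ) ^ (-σ) with hr
    have hr0 : 0 ≤ r := Real.rpow_nonneg h2.le _
    have hr1 : r < 1 := Real.rpow_lt_one_of_one_lt_of_neg one_lt_two (by linarith)
    refine PSaux.generic t β ht (fun m i => if i = 0 then 1 else 0)
      (fun m i => by by_cases h : i = 0 <;> simp [h])
      (fun m => (2:ℝ) ^ (-(1 + σ) * (m:ℝ))) (fun m => Real.rpow_nonneg h2.le _)
      (fun m => 1) ?_ (2 * (1 - r)⁻¹) ?_ (min 1 ((2:ℝ) ^ β)) hKd ?_
    · -- hD
      intro m z hz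
      have e0 : ∑ i ∈ range (2 ^ m), (if i = 0 then (1:ℂ) else 0) * z ^ i = 1 := by
        rw [Finset.sum_eq_single_of_mem 0 (mem_range.mpr (by positivity))]
        · simp
        · intro b _ hb
          simp [hb]
      rw [e0, norm_one]
    · -- hC
      intro M
      have hterm : ∀ m : ℕ, (2:ℝ) ^ (-(1 + σ) * (m:ℝ)) * 1 * 2 ^ (m + 1) = 2 * r ^ m := by
        intro m
        have crm : (2:ℝ) * r ^ m = (2:ℝ) ^ (1 + -σ * (m:ℝ)) := by
          rw [hr, ← Real.rpow_natCast ((2:ℝ) ^ (-σ)) m, ← Real.rpow_mul h2.le,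
            Real.rpow_add h2, Real.rpow_one]
        rw [mul_one, ← Real.rpow_natCast (2:ℝ) (m + 1), ← Real.rpow_add h2, crm]
        congr 1
        push_cast
        ring
      rw [Finset.sum_congr rfl fun m _ => hterm m, ← Finset.mul_sum]
      exact mul_le_mul_of_nonneg_left (PSaux.geomC hr0 hr1 M) (by norm_num)
    · -- hdiv
      intro m
      have e0 : ∑ i ∈ range (2 ^ m), ((2:ℝ) ^ (-(1 + σ) * (m:ℝ)) *
          ‖(if i = 0 then (1:ℂ) else 0)‖) ^ t * (1 + ((2 ^ m + i : ℕ) : ℝ)) ^ β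
          = ((2:ℝ) ^ (-(1 + σ) * (m:ℝ))) ^ t * (1 + ((2 ^ m + 0 : ℕ) : ℝ)) ^ β := by
        rw [Finset.sum_eq_single_of_mem 0 (mem_range.mpr (by positivity))]
        · simp
        · intro b _ hb
          rw [if_neg hb, norm_zero, mul_zero, Real.zero_rpow ht.ne', zero_mul]
      rw [e0]
      have e3 : ((2:ℝ) ^ (-(1 + σ) * (m:ℝ))) ^ t = (2:ℝ) ^ (-(1 + σ) * (m:ℝ) * t) :=
        (Real.rpow_mul h2.le _ _).symm
      rw [e3]
      have hlow : (2:ℝ) ^ ((m:ℝ) * β) * min 1 ((2:ℝ) ^ β) ≤ (1 + ((2 ^ m + 0 : ℕ) : ℝ)) ^ β := by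
        refine PSaux.blockLower β m _ ?_ ?_
        · push_cast
          have : (0:ℝ) ≤ (2:ℝ) ^ m := by positivity
          linarith [this]
        · push_cast
          rw [pow_succ]
          nlinarith [show (1:ℝ) ≤ (2:ℝ) ^ m from one_le_pow₀ one_le_two]
      calc min 1 ((2:ℝ) ^ β)
          ≤ (2:ℝ) ^ ((m:ℝ) * (ε - σ * t)) * min 1 ((2:ℝ) ^ β) := by
            have h5 : (1:ℝ) ≤ (2:ℝ) ^ ((m:ℝ) * (ε - σ * t)) := by
              rw [show (1:ℝ) = (2:ℝ) ^ (0:ℝ) from (Real.rpow_zero 2).symm]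
              refine Real.rpow_le_rpow_of_exponent_le one_le_two ?_
              have : 0 ≤ ε - σ * t := by linarith
              positivity
            nlinarith [hKd]
        _ = (2:ℝ) ^ (-(1 + σ) * (m:ℝ) * t) * ((2:ℝ) ^ ((m:ℝ) * β) * min 1 ((2:ℝ) ^ β)) := by
            rw [← mul_assoc, ← Real.rpow_add h2]
            congr 2
            rw [hε]
            ring
        _ ≤ (2:ℝ) ^ (-(1 + σ) * (m:ℝ) * t) * (1 + ((2 ^ m + 0 : ℕ) : ℝ)) ^ β :=
            mul_le_mul_of_nonneg_left hlow (Real.rpow_nonneg h2.le _)
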